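/- Let θ > 0 and let T₁, T₂, U be independent random variables on a probability space, where P(Tᵢ > t) = exp(−θ t) for all t ≥ 0 (i = 1, 2) and U is uniformly distributed on (0,1). With Q(u) = −ln(1−u)/θ, R = min(T₁, Q(U)) and S = min(T₂, Q(1−U)), one has P(exp(−θ R) + exp(−θ S) = 1) = 1/6. -/

import Mathlib

open MeasureTheory ProbabilityTheory Real

private lemma bnmo_maxsum (u a b : ℝ) (ha : a ≠ 1 - u) (hb : b ≠ u) :
    max a (1 - u) + max b u = 1 ↔ a < 1 - u ∧ b < u := by
  constructor
  · intro h
    rcases lt_or_gt_of_ne ha with h1 | h1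
    · rcases lt_or_gt_of_ne hb with h2 | h2
      · exact ⟨h1, h2⟩
      · rw [max_eq_right h1.le, max_eq_left h2.le] at h
        exact absurd h (by intro h'; apply hb; linarith)
    · rw [max_eq_left h1.le] at h
      have := le_max_right b u
      exact absurd h (by intro h'; linarith)
  · rintro ⟨h1, h2⟩
    rw [max_eq_right h1.le, max_eq_right h2.le]
    ring

private lemma bnmo_exp_neg_min (θ x y : ℝ) (hθ : 0 < θ) :
    Real.exp (-θ * min x y) = max (Real.exp (-θ * x)) (Real.exp (-θ * y)) := by
  rcases le_total x y with h | h
  · rw [min_eq_left h, max_eq_left (Real.exp_le_exp.2 (by nlinarith))]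
  · rw [min_eq_right h, max_eq_right (Real.exp_le_exp.2 (by nlinarith))]

/-- In the symmetric case `θ₁ = θ₂ = θ₁₂ = θ`, the probability of the singular
part of the BNMO model equals `1/6`. -/
theorem bnmo_singular_probability_symmetric
    {Ω : Type*} [MeasureSpace Ω] [IsProbabilityMeasure (ℙ : Measure Ω)]
    (θ : ℝ) (hθ : 0 < θ)
    (T1 T2 U : Ω → ℝ)
    (hT1m : Measurable T1) (hT2m : Measurable T2) (hUm : Measurable U)
    (hindep : iIndepFun ![T1, T2, U] ℙ)
    (hT1 : ∀ t : ℝ, 0 ≤ t → ℙ {ω | T1 ω > t} = ENNReal.ofReal (exp (-θ * t)))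
    (hT2 : ∀ t : ℝ, 0 ≤ t → ℙ {ω | T2 ω > t} = ENNReal.ofReal (exp (-θ * t)))
    (hU : Measure.map U ℙ = volume.restrict (Set.Ioo (0 : ℝ) 1))
    (Q : ℝ → ℝ) (hQ : ∀ u : ℝ, Q u = -Real.log (1 - u) / θ)
    (R S : Ω → ℝ)
    (hR : ∀ ω, R ω = min (T1 ω) (Q (U ω)))
    (hS : ∀ ω, S ω = min (T2 ω) (Q (1 - U ω))) :
    ℙ {ω | exp (-θ * R ω) + exp (-θ * S ω) = 1} = 1 / 6 := by
  have hθ' : θ ≠ 0 := hθ.ne'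
  -- basic facts about Q
  have hQexp : ∀ u : ℝ, 0 < u → u < 1 → Real.exp (-θ * Q u) = 1 - u := by
    intro u h0 h1
    have h1u : (0:ℝ) < 1 - u := by linarith
    rw [hQ, show -θ * (-Real.log (1 - u) / θ) = Real.log (1 - u) by field_simp]
    exact Real.exp_log h1u
  have hQmeas : Measurable Q := by
    have : Q = fun u => -Real.log (1 - u) / θ := funext hQ
    rw [this]
    exact ((Real.measurable_log.comp (measurable_const.sub measurable_id)).neg).div_const θ
  have hQnonneg : ∀ u : ℝ, 0 < u → u < 1 → 0 ≤ Q u := by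
    intro u h0 h1
    rw [hQ]
    have hl : Real.log (1 - u) ≤ 0 := Real.log_nonpos (by linarith) (by linarith)
    exact div_nonneg (neg_nonneg.2 hl) hθ.le
  -- measures
  set ν : Measure ℝ := volume.restrict (Set.Ioo (0 : ℝ) 1) with hνdef
  set μ1 : Measure ℝ := Measure.map T1 ℙ with hμ1def
  set μ2 : Measure ℝ := Measure.map T2 ℙ with hμ2def
  have hμ1 : ∀ t : ℝ, 0 ≤ t → μ1 (Set.Ioi t) = ENNReal.ofReal (Real.exp (-θ * t)) := by
    intro t ht
    rw [hμ1def, Measure.map_apply hT1m measurableSet_Ioi]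
    exact hT1 t ht
  have hμ2 : ∀ t : ℝ, 0 ≤ t → μ2 (Set.Ioi t) = ENNReal.ofReal (Real.exp (-θ * t)) := by
    intro t ht
    rw [hμ2def, Measure.map_apply hT2m measurableSet_Ioi]
    exact hT2 t ht
  -- independence
  have hm : ∀ i, Measurable (![T1, T2, U] i) := by
    intro i
    fin_cases i
    · exact hT1m
    · exact hT2m
    · exact hUm
  have h12 : IndepFun T1 T2 ℙ := hindep.indepFun (show (0 : Fin 3) ≠ 1 by decide)
  have h1U : IndepFun T1 U ℙ := hindep.indepFun (show (0 : Fin 3) ≠ 2 by decide)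
  have h2U : IndepFun T2 U ℙ := hindep.indepFun (show (1 : Fin 3) ≠ 2 by decide)
  have hpU : IndepFun U (fun ω => (T1 ω, T2 ω)) ℙ :=
    (hindep.indepFun_prodMk hm 0 1 2 (by decide) (by decide)).symm
  -- joint laws
  have law12 : Measure.map (fun ω => (T1 ω, T2 ω)) ℙ = μ1.prod μ2 :=
    (indepFun_iff_map_prod_eq_prod_map_map hT1m.aemeasurable hT2m.aemeasurable).mp h12
  have lawU12 : Measure.map (fun ω => (U ω, (T1 ω, T2 ω))) ℙ = ν.prod (μ1.prod μ2) := by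
    rw [(indepFun_iff_map_prod_eq_prod_map_map hUm.aemeasurable
      (hT1m.prodMk hT2m).aemeasurable).mp hpU, hU, law12]
  have law1U : Measure.map (fun ω => (T1 ω, U ω)) ℙ = μ1.prod ν := by
    rw [(indepFun_iff_map_prod_eq_prod_map_map hT1m.aemeasurable hUm.aemeasurable).mp h1U, hU]
  have law2U : Measure.map (fun ω => (T2 ω, U ω)) ℙ = μ2.prod ν := by
    rw [(indepFun_iff_map_prod_eq_prod_map_map hT2m.aemeasurable hUm.aemeasurable).mp h2U, hU]
  -- ν kills singletons
  have hνs : ∀ X : Set ℝ, (∃ x : ℝ, X ∩ Set.Ioo (0:ℝ) 1 ⊆ {x}) → MeasurableSet X → ν X = 0 := by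
    rintro X ⟨x, hx⟩ hXm
    rw [hνdef, Measure.restrict_apply hXm]
    exact measure_mono_null hx Real.volume_singleton
  -- the good event
  set G : Set Ω := {ω | U ω ∈ Set.Ioo (0:ℝ) 1 ∧ Q (U ω) < T1 ω ∧ Q (1 - U ω) < T2 ω} with hGdef
  set SG : Set (ℝ × ℝ × ℝ) :=
    {p : ℝ × ℝ × ℝ | p.1 ∈ Set.Ioo (0:ℝ) 1 ∧ Q p.1 < p.2.1 ∧ Q (1 - p.1) < p.2.2} with hSGdef
  have hSGm : MeasurableSet SG := by
    exact (measurable_fst measurableSet_Ioo).inter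
      ((measurableSet_lt (hQmeas.comp measurable_fst) measurable_snd.fst).inter
       (measurableSet_lt (hQmeas.comp (measurable_const.sub measurable_fst)) measurable_snd.snd))
  -- computation of ℙ G
  have hPG : ℙ G = 1 / 6 := by
    have h1 : ℙ G = (ν.prod (μ1.prod μ2)) SG := by
      rw [← lawU12, Measure.map_apply (hUm.prodMk (hT1m.prodMk hT2m)) hSGm]
      rfl
    rw [h1, Measure.prod_apply hSGm]
    have h2 : ∫⁻ u, (μ1.prod μ2) (Prod.mk u ⁻¹' SG) ∂ν
        = ∫⁻ u in Set.Ioo (0:ℝ) 1, ENNReal.ofReal ((1 - u) * u) := by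
      rw [hνdef]
      refine setLIntegral_congr_fun measurableSet_Ioo ?_
      intro u hu
      have hu0 : (0:ℝ) < u := hu.1
      have hu1 : u < 1 := hu.2
      have hslice : Prod.mk u ⁻¹' SG = Set.Ioi (Q u) ×ˢ Set.Ioi (Q (1 - u)) := by
        ext q
        simp only [hSGdef, Set.mem_preimage, Set.mem_setOf_eq, Set.mem_prod, Set.mem_Ioi,
          Set.mem_Ioo]
        exact ⟨fun h => h.2, fun h => ⟨⟨hu0, hu1⟩, h⟩⟩
      beta_reduce
      rw [hslice, Measure.prod_prod, hμ1 (Q u) (hQnonneg u hu0 hu1),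
        hμ2 (Q (1 - u)) (hQnonneg (1 - u) (by linarith) (by linarith)),
        hQexp u hu0 hu1, hQexp (1 - u) (by linarith) (by linarith),
        show (1:ℝ) - (1 - u) = u by ring, ← ENNReal.ofReal_mul (by linarith)]
    rw [h2]
    have h3 : ∫⁻ u in Set.Ioo (0:ℝ) 1, ENNReal.ofReal ((1 - u) * u)
        = ENNReal.ofReal (∫ u in Set.Ioo (0:ℝ) 1, (1 - u) * u) := by
      rw [ofReal_integral_eq_lintegral_ofReal]
      · exact ((continuous_const.sub continuous_id).mul continuous_id).integrableOn_Icc.mono_set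
          Set.Ioo_subset_Icc_self
      · refine (ae_restrict_iff' measurableSet_Ioo).2 (ae_of_all _ ?_)
        intro u hu
        have : (0:ℝ) ≤ (1 - u) * u := mul_nonneg (by linarith [hu.2]) hu.1.le
        simpa using this
    rw [h3]
    have h4 : ∫ u in Set.Ioo (0:ℝ) 1, (1 - u) * u = 1 / 6 := by
      rw [← MeasureTheory.integral_Ioc_eq_integral_Ioo,
        ← intervalIntegral.integral_of_le (zero_le_one)]
      have : ∀ x : ℝ, (1 - x) * x = x - x ^ 2 := fun x => by ring
      simp_rw [this]
      rw [intervalIntegral.integral_sub intervalIntegral.intervalIntegrable_id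
        (intervalIntegral.intervalIntegrable_pow 2), integral_id, integral_pow]
      norm_num
    rw [h4, show (1:ℝ)/6 = 6⁻¹ by norm_num,
      ENNReal.ofReal_inv_of_pos (by norm_num : (0:ℝ) < 6)]
    norm_num
  -- null sets
  have hN0 : ℙ {ω | U ω ∉ Set.Ioo (0:ℝ) 1} = 0 := by
    have he : {ω | U ω ∉ Set.Ioo (0:ℝ) 1} = U ⁻¹' (Set.Ioo (0:ℝ) 1)ᶜ := rfl
    rw [he, ← Measure.map_apply hUm measurableSet_Ioo.compl, hU,
      Measure.restrict_apply measurableSet_Ioo.compl, Set.compl_inter_self]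
    exact measure_empty
  have hJ1 : ℙ {ω | T1 ω = Q (U ω)} = 0 := by
    have hSm : MeasurableSet {p : ℝ × ℝ | p.1 = Q p.2} :=
      measurableSet_eq_fun measurable_fst (hQmeas.comp measurable_snd)
    have h1 : ℙ {ω | T1 ω = Q (U ω)} = (μ1.prod ν) {p : ℝ × ℝ | p.1 = Q p.2} := by
      rw [← law1U, Measure.map_apply (hT1m.prodMk hUm) hSm]
      rfl
    rw [h1, Measure.prod_apply hSm]
    have h2 : ∀ t : ℝ, ν (Prod.mk t ⁻¹' {p : ℝ × ℝ | p.1 = Q p.2}) = 0 := by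
      intro t
      refine hνs _ ⟨1 - Real.exp (-(θ * t)), ?_⟩
        (measurableSet_eq_fun measurable_const hQmeas)
      rintro u ⟨hQu, hu0, hu1⟩
      simp only [Set.mem_preimage, Set.mem_setOf_eq] at hQu
      have h1u : (0:ℝ) < 1 - u := by linarith
      have hlog : Real.log (1 - u) = -(θ * t) := by
        rw [hQ] at hQu
        field_simp at hQu
        linarith
      have : (1:ℝ) - u = Real.exp (-(θ * t)) := by
        rw [← hlog, Real.exp_log h1u]
      simp only [Set.mem_singleton_iff]
      linarith
    simp only [h2]
    exact lintegral_zero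
  have hJ2 : ℙ {ω | T2 ω = Q (1 - U ω)} = 0 := by
    have hSm : MeasurableSet {p : ℝ × ℝ | p.1 = Q (1 - p.2)} :=
      measurableSet_eq_fun measurable_fst (hQmeas.comp (measurable_const.sub measurable_snd))
    have h1 : ℙ {ω | T2 ω = Q (1 - U ω)} = (μ2.prod ν) {p : ℝ × ℝ | p.1 = Q (1 - p.2)} := by
      rw [← law2U, Measure.map_apply (hT2m.prodMk hUm) hSm]
      rfl
    rw [h1, Measure.prod_apply hSm]
    have h2 : ∀ t : ℝ, ν (Prod.mk t ⁻¹' {p : ℝ × ℝ | p.1 = Q (1 - p.2)}) = 0 := by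
      intro t
      refine hνs _ ⟨Real.exp (-(θ * t)), ?_⟩
        (measurableSet_eq_fun measurable_const
          (hQmeas.comp (measurable_const.sub measurable_id)))
      rintro u ⟨hQu, hu0, hu1⟩
      simp only [Set.mem_preimage, Set.mem_setOf_eq] at hQu
      have hlog : Real.log u = -(θ * t) := by
        rw [hQ, show (1:ℝ) - (1 - u) = u by ring] at hQu
        field_simp at hQu
        linarith
      have : u = Real.exp (-(θ * t)) := by
        rw [← hlog, Real.exp_log hu0]
      simp only [Set.mem_singleton_iff]
      linarith
    simp only [h2]
    exact lintegral_zero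
  set N : Set Ω := ({ω | U ω ∉ Set.Ioo (0:ℝ) 1} ∪ {ω | T1 ω = Q (U ω)}) ∪
      {ω | T2 ω = Q (1 - U ω)} with hNdef
  have hN : ℙ N = 0 := measure_union_null (measure_union_null hN0 hJ1) hJ2
  -- the event equals G modulo N
  have hEG : {ω | exp (-θ * R ω) + exp (-θ * S ω) = 1} \ N = G \ N := by
    ext ω
    simp only [Set.mem_diff, hNdef, Set.mem_union, Set.mem_setOf_eq, not_or, not_not]
    constructor
    · rintro ⟨hE, ⟨hmem, h1⟩, h2⟩
      refine ⟨?_, ⟨⟨hmem, h1⟩, h2⟩⟩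
      obtain ⟨hu0, hu1⟩ := hmem
      have e1 : exp (-θ * R ω) = max (exp (-θ * T1 ω)) (1 - U ω) := by
        rw [hR, bnmo_exp_neg_min θ _ _ hθ, hQexp (U ω) hu0 hu1]
      have e2 : exp (-θ * S ω) = max (exp (-θ * T2 ω)) (U ω) := by
        rw [hS, bnmo_exp_neg_min θ _ _ hθ, hQexp (1 - U ω) (by linarith) (by linarith),
          show (1:ℝ) - (1 - U ω) = U ω by ring]
      have ha : exp (-θ * T1 ω) ≠ 1 - U ω := by
        intro h
        apply h1
        have : exp (-θ * T1 ω) = exp (-θ * Q (U ω)) := by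
          rw [h, hQexp (U ω) hu0 hu1]
        exact mul_left_cancel₀ (neg_ne_zero.2 hθ') (Real.exp_eq_exp.mp this)
      have hb : exp (-θ * T2 ω) ≠ U ω := by
        intro h
        apply h2
        have : exp (-θ * T2 ω) = exp (-θ * Q (1 - U ω)) := by
          rw [h, hQexp (1 - U ω) (by linarith) (by linarith)]
          ring
        exact mul_left_cancel₀ (neg_ne_zero.2 hθ') (Real.exp_eq_exp.mp this)
      rw [e1, e2] at hE
      obtain ⟨c1, c2⟩ := (bnmo_maxsum (U ω) _ _ ha hb).mp hE
      have d1 : Q (U ω) < T1 ω := by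
        rw [← hQexp (U ω) hu0 hu1, Real.exp_lt_exp] at c1
        nlinarith
      have d2 : Q (1 - U ω) < T2 ω := by
        have h' : exp (-θ * T2 ω) < exp (-θ * Q (1 - U ω)) := by
          rw [hQexp (1 - U ω) (by linarith) (by linarith)]
          linarith
        rw [Real.exp_lt_exp] at h'
        nlinarith
      exact ⟨⟨hu0, hu1⟩, d1, d2⟩
    · rintro ⟨⟨⟨hu0, hu1⟩, d1, d2⟩, hrest⟩
      refine ⟨?_, hrest⟩
      have e1 : exp (-θ * R ω) = max (exp (-θ * T1 ω)) (1 - U ω) := by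
        rw [hR, bnmo_exp_neg_min θ _ _ hθ, hQexp (U ω) hu0 hu1]
      have e2 : exp (-θ * S ω) = max (exp (-θ * T2 ω)) (U ω) := by
        rw [hS, bnmo_exp_neg_min θ _ _ hθ, hQexp (1 - U ω) (by linarith) (by linarith),
          show (1:ℝ) - (1 - U ω) = U ω by ring]
      have c1 : exp (-θ * T1 ω) < 1 - U ω := by
        rw [← hQexp (U ω) hu0 hu1, Real.exp_lt_exp]
        nlinarith
      have c2 : exp (-θ * T2 ω) < U ω := by
        have h' : exp (-θ * T2 ω) < exp (-θ * Q (1 - U ω)) := by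
          rw [Real.exp_lt_exp]
          nlinarith
        rw [hQexp (1 - U ω) (by linarith) (by linarith)] at h'
        linarith
      rw [e1, e2, max_eq_right c1.le, max_eq_right c2.le]
      ring
  calc ℙ {ω | exp (-θ * R ω) + exp (-θ * S ω) = 1}
      = ℙ ({ω | exp (-θ * R ω) + exp (-θ * S ω) = 1} \ N) := (measure_diff_null hN).symm
    _ = ℙ (G \ N) := by rw [hEG]
    _ = ℙ G := measure_diff_null hN
    _ = 1 / 6 := hPG
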